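/- Let η_i, η_j be iid with everywhere positive density and let ξ_i, ξ_j be iid random variables independent of (η_i, η_j). For deterministic reals v_i > v_j, define r_i = v_i + ξ_i + η_i and r_j = v_j + ξ_j + η_j. Then P(r_i > r_j) > P(r_j > r_i). -/

import Mathlib

open MeasureTheory ProbabilityTheory

theorem stmt_17 {Ω : Type*} [MeasureSpace Ω] [IsProbabilityMeasure (ℙ : Measure Ω)]
    (ηi ηj ξi ξj : Ω → ℝ) (f : ℝ → ℝ) (hf_pos : ∀ x, 0 < f x)
    (hmi : Measurable ηi) (hmj : Measurable ηj)
    (hmxi : Measurable ξi) (hmxj : Measurable ξj)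
    (hη_indep : ProbabilityTheory.IndepFun ηi ηj ℙ)
    (hdi : Measure.map ηi ℙ = volume.withDensity (fun x => ENNReal.ofReal (f x)))
    (hdj : Measure.map ηj ℙ = volume.withDensity (fun x => ENNReal.ofReal (f x)))
    (hξ_indep : ProbabilityTheory.IndepFun ξi ξj ℙ)
    (hξ_ident : Measure.map ξi ℙ = Measure.map ξj ℙ)
    (h_indep : ProbabilityTheory.IndepFun (fun ω => (ηi ω, ηj ω)) (fun ω => (ξi ω, ξj ω)) ℙ)
    (vi vj : ℝ) (hv : vj < vi) :
    ℙ {ω | vj + ξj ω + ηj ω < vi + ξi ω + ηi ω}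
      > ℙ {ω | vi + ξi ω + ηi ω < vj + ξj ω + ηj ω} := by
  have hd0 : (0:ℝ) < vi - vj := by linarith
  -- marginal laws
  have hκj : Measure.map ηj ℙ = Measure.map ηi ℙ := by rw [hdi, hdj]
  have hρj : Measure.map ξj ℙ = Measure.map ξi ℙ := hξ_ident.symm
  set κ : Measure ℝ := Measure.map ηi ℙ with hκ
  set ρ : Measure ℝ := Measure.map ξi ℙ with hρ
  haveI hPκ : IsProbabilityMeasure κ := Measure.isProbabilityMeasure_map hmi.aemeasurable
  haveI hPρ : IsProbabilityMeasure ρ := Measure.isProbabilityMeasure_map hmxi.aemeasurable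
  -- joint law factorizations
  have S1 : Measure.map (fun ω => (ηi ω, ηj ω)) ℙ = κ.prod κ := by
    rw [(indepFun_iff_map_prod_eq_prod_map_map hmi.aemeasurable hmj.aemeasurable).mp hη_indep,
      hκj]
  have S2 : Measure.map (fun ω => (ξi ω, ξj ω)) ℙ = ρ.prod ρ := by
    rw [(indepFun_iff_map_prod_eq_prod_map_map hmxi.aemeasurable hmxj.aemeasurable).mp hξ_indep,
      hρj]
  set T : Ω → (ℝ × ℝ) × (ℝ × ℝ) := fun ω => ((ηi ω, ηj ω), (ξi ω, ξj ω)) with hT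
  have hmT : Measurable T := (hmi.prodMk hmj).prodMk (hmxi.prodMk hmxj)
  have S3 : Measure.map T ℙ = (κ.prod κ).prod (ρ.prod ρ) := by
    rw [hT, (indepFun_iff_map_prod_eq_prod_map_map
      ((hmi.prodMk hmj).aemeasurable) ((hmxi.prodMk hmxj).aemeasurable)).mp h_indep, S1, S2]
  set M : Measure ((ℝ × ℝ) × (ℝ × ℝ)) := (κ.prod κ).prod (ρ.prod ρ) with hM
  haveI : IsProbabilityMeasure M := by rw [hM]; infer_instance
  -- events in the product space
  set A1 : Set ((ℝ × ℝ) × (ℝ × ℝ)) := {p | vj + p.2.2 + p.1.2 < vi + p.2.1 + p.1.1} with hA1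
  set A2 : Set ((ℝ × ℝ) × (ℝ × ℝ)) := {p | vi + p.2.1 + p.1.1 < vj + p.2.2 + p.1.2} with hA2
  have hmA1 : MeasurableSet A1 := measurableSet_lt (by fun_prop) (by fun_prop)
  have hmA2 : MeasurableSet A2 := measurableSet_lt (by fun_prop) (by fun_prop)
  have e1 : ℙ {ω | vj + ξj ω + ηj ω < vi + ξi ω + ηi ω} = M A1 := by
    rw [← S3, Measure.map_apply hmT hmA1]; rfl
  have e2 : ℙ {ω | vi + ξi ω + ηi ω < vj + ξj ω + ηj ω} = M A2 := by
    rw [← S3, Measure.map_apply hmT hmA2]; rfl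
  rw [gt_iff_lt, e1, e2]
  -- symmetry: swap the two coordinates in each factor
  set σ : (ℝ × ℝ) × (ℝ × ℝ) → (ℝ × ℝ) × (ℝ × ℝ) := Prod.map Prod.swap Prod.swap with hσ
  have hmσ : Measurable σ := measurable_swap.prodMap measurable_swap
  have hσM : Measure.map σ M = M := by
    rw [hM, hσ, ← Measure.map_prod_map _ _ measurable_swap measurable_swap,
      Measure.prod_swap, Measure.prod_swap]
  set A2' : Set ((ℝ × ℝ) × (ℝ × ℝ)) := {p | vi + p.2.2 + p.1.2 < vj + p.2.1 + p.1.1} with hA2'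
  have hmA2' : MeasurableSet A2' := measurableSet_lt (by fun_prop) (by fun_prop)
  have eA2 : M A2 = M A2' := by
    conv_lhs => rw [← hσM]
    rw [Measure.map_apply hmσ hmA2]
    rfl
  -- the interval I and the set G
  set m : Measure ℝ := Measure.map (fun q : ℝ × ℝ => q.1 + q.2) (κ.prod ρ) with hm
  haveI : IsProbabilityMeasure m :=
    Measure.isProbabilityMeasure_map (by fun_prop : Measurable fun q : ℝ × ℝ => q.1 + q.2).aemeasurable
  have hr : (0:ℝ) < (vi - vj) / 2 := by linarith
  obtain ⟨n, hn⟩ : ∃ n : ℤ,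
      m (Set.Icc (n * ((vi - vj)/2)) (n * ((vi - vj)/2) + (vi - vj)/2)) ≠ 0 := by
    by_contra h
    push_neg at h
    have hcover : (Set.univ : Set ℝ) ⊆
        ⋃ n : ℤ, Set.Icc (n * ((vi - vj)/2)) (n * ((vi - vj)/2) + (vi - vj)/2) := by
      intro x _
      refine Set.mem_iUnion.mpr ⟨⌊x / ((vi - vj)/2)⌋, ?_, ?_⟩
      · calc (⌊x / ((vi - vj)/2)⌋ : ℝ) * ((vi - vj)/2)
            ≤ (x / ((vi - vj)/2)) * ((vi - vj)/2) := by
              gcongr; exact Int.floor_le _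
          _ = x := div_mul_cancel₀ x hr.ne'
      · have h1 : x / ((vi - vj)/2) < ⌊x / ((vi - vj)/2)⌋ + 1 := Int.lt_floor_add_one _
        have h2 : (x / ((vi - vj)/2)) * ((vi - vj)/2)
            ≤ ((⌊x / ((vi - vj)/2)⌋ : ℝ) + 1) * ((vi - vj)/2) := by
              have := h1.le
              gcongr
        rw [div_mul_cancel₀ x hr.ne'] at h2
        nlinarith
    have h0 : m Set.univ = 0 :=
      measure_mono_null hcover (measure_iUnion_null fun n => h n)
    simp [measure_univ] at h0
  set I : Set ℝ := Set.Icc (n * ((vi - vj)/2)) (n * ((vi - vj)/2) + (vi - vj)/2) with hI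
  have hmI : MeasurableSet I := measurableSet_Icc
  have hIlen : ∀ x ∈ I, ∀ y ∈ I, y - x ≤ (vi - vj)/2 := by
    rintro x ⟨hx1, hx2⟩ y ⟨hy1, hy2⟩
    linarith
  set S : Set (ℝ × ℝ) := {q | q.1 + q.2 ∈ I} with hS
  have hmS : MeasurableSet S := (by fun_prop : Measurable fun q : ℝ × ℝ => q.1 + q.2) hmI
  set G : Set ((ℝ × ℝ) × (ℝ × ℝ)) := {p | p.1.1 + p.2.1 ∈ I ∧ p.1.2 + p.2.2 ∈ I} with hG
  have hmG : MeasurableSet G := by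
    apply MeasurableSet.inter
    · exact (by fun_prop : Measurable fun p : (ℝ × ℝ) × (ℝ × ℝ) => p.1.1 + p.2.1) hmI
    · exact (by fun_prop : Measurable fun p : (ℝ × ℝ) × (ℝ × ℝ) => p.1.2 + p.2.2) hmI
  -- the key product computation
  have hφ : Measurable fun a : ℝ => ρ (Prod.mk a ⁻¹' S) := measurable_measure_prodMk_left hmS
  have hint : ∫⁻ a, ρ (Prod.mk a ⁻¹' S) ∂κ = m I := by
    rw [hm, Measure.map_apply (by fun_prop) hmI,
      show ((fun q : ℝ × ℝ => q.1 + q.2) ⁻¹' I) = S from rfl, Measure.prod_apply hmS]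
  have key : M G = m I * m I := by
    rw [hM, Measure.prod_apply hmG]
    have sect : ∀ ab : ℝ × ℝ, (Prod.mk ab ⁻¹' G : Set (ℝ × ℝ))
        = (Prod.mk ab.1 ⁻¹' S) ×ˢ (Prod.mk ab.2 ⁻¹' S) := by
      intro ab; rfl
    calc ∫⁻ ab, (ρ.prod ρ) (Prod.mk ab ⁻¹' G) ∂(κ.prod κ)
        = ∫⁻ ab, ρ (Prod.mk ab.1 ⁻¹' S) * ρ (Prod.mk ab.2 ⁻¹' S) ∂(κ.prod κ) := by
          simp_rw [sect, Measure.prod_prod]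
      _ = (∫⁻ a, ρ (Prod.mk a ⁻¹' S) ∂κ) * ∫⁻ b, ρ (Prod.mk b ⁻¹' S) ∂κ :=
          lintegral_prod_mul hφ.aemeasurable hφ.aemeasurable
      _ = m I * m I := by rw [hint]
  have hMG : 0 < M G := by
    rw [key]; exact ENNReal.mul_pos hn hn
  -- inclusions
  have hsub : A2' ∪ G ⊆ A1 := by
    rintro ⟨⟨a, b⟩, s, t⟩ hp
    rcases hp with hp | hp
    · simp only [hA2', Set.mem_setOf_eq] at hp
      simp only [hA1, Set.mem_setOf_eq]
      linarith
    · obtain ⟨hx, hy⟩ := hp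
      have := hIlen _ hx _ hy
      simp only [hA1, Set.mem_setOf_eq]
      linarith
  have hdisj : Disjoint A2' G := by
    rw [Set.disjoint_left]
    rintro ⟨⟨a, b⟩, s, t⟩ hp ⟨hx, hy⟩
    simp only [hA2', Set.mem_setOf_eq] at hp
    have := hIlen _ hy _ hx
    linarith
  calc M A2 = M A2' := eA2
    _ < M A2' + M G := ENNReal.lt_add_right (measure_ne_top M A2') hMG.ne'
    _ = M (A2' ∪ G) := (measure_union hdisj hmG).symm
    _ ≤ M A1 := measure_mono hsub
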